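/- Let f : ℝ^{n1×n2} → ℝ be differentiable and (L, 2r)-restricted smooth for some L > 0. Let B ∈ ℝ^{n1×r} and R ∈ ℝ^{n2×r}, set X := B Rᵀ, and let λ > 0, η ≥ 0, and D ∈ ℝ^{n1×r} be arbitrary. Then f((B − η D) Rᵀ) ≤ f(X) − η ⟨∇f(X) R, D⟩_F + (η² L / 2) ‖D (RᵀR + λ I_r)^{1/2}‖_F². -/

import Mathlib

open Matrix

/-- Frobenius inner product of two real matrices. -/
noncomputable def finner {m n : Type*} [Fintype m] [Fintype n]
    (A B : Matrix m n ℝ) : ℝ := (Aᵀ * B).trace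

/-- Frobenius norm of a real matrix. -/
noncomputable def fnorm {m n : Type*} [Fintype m] [Fintype n]
    (A : Matrix m n ℝ) : ℝ := Real.sqrt (finner A A)

open scoped Classical in
/-- Square root of a positive semidefinite real matrix (junk value `0` otherwise). -/
noncomputable def psqrt {r : ℕ} (M : Matrix (Fin r) (Fin r) ℝ) : Matrix (Fin r) (Fin r) ℝ :=
  if h : M.PosSemidef then
    (h.1.eigenvectorUnitary : Matrix (Fin r) (Fin r) ℝ) *
      diagonal (fun i => Real.sqrt (h.1.eigenvalues i)) *
      (star h.1.eigenvectorUnitary : Matrix (Fin r) (Fin r) ℝ)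
  else 0

lemma finner_self_nonneg {m n : Type*} [Fintype m] [Fintype n] (A : Matrix m n ℝ) :
    0 ≤ finner A A := by
  simp only [finner, Matrix.trace, Matrix.diag, Matrix.mul_apply, Matrix.transpose_apply]
  exact Finset.sum_nonneg fun i _ => Finset.sum_nonneg fun j _ => mul_self_nonneg _

lemma fnorm_sq {m n : Type*} [Fintype m] [Fintype n] (A : Matrix m n ℝ) :
    fnorm A ^ 2 = finner A A := Real.sq_sqrt (finner_self_nonneg A)


/-- matrix form of the paper's Lemma 3.
Descent inequality for one damped-preconditioned factor update of APGD. -/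
theorem stmt_2 {n1 n2 r : ℕ}
    (f : Matrix (Fin n1) (Fin n2) ℝ → ℝ)
    (gradf : Matrix (Fin n1) (Fin n2) ℝ → Matrix (Fin n1) (Fin n2) ℝ)
    (L : ℝ) (hL : 0 < L)
    (hdiff : ∀ X H : Matrix (Fin n1) (Fin n2) ℝ,
      HasDerivAt (fun t : ℝ => f (X + t • H)) (finner (gradf X) H) 0)
    (hsmooth : ∀ X1 X2 : Matrix (Fin n1) (Fin n2) ℝ, X1.rank ≤ 2 * r → X2.rank ≤ 2 * r →
      f X2 ≤ f X1 + finner (gradf X1) (X2 - X1) + L / 2 * fnorm (X2 - X1) ^ 2)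
    (B : Matrix (Fin n1) (Fin r) ℝ) (R : Matrix (Fin n2) (Fin r) ℝ)
    (X : Matrix (Fin n1) (Fin n2) ℝ) (hX : X = B * Rᵀ)
    (lam η : ℝ) (hlam : 0 < lam) (hη : 0 ≤ η)
    (D : Matrix (Fin n1) (Fin r) ℝ) :
    f ((B - η • D) * Rᵀ) ≤
      f X - η * finner (gradf X * R) D +
        η ^ 2 * L / 2 * fnorm (D * psqrt (Rᵀ * R + lam • (1 : Matrix (Fin r) (Fin r) ℝ))) ^ 2 := by

  set M : Matrix (Fin r) (Fin r) ℝ := Rᵀ * R + lam • (1 : Matrix (Fin r) (Fin r) ℝ) with hM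
  -- M is PSD
  have hRtR : (Rᵀ * R).PosSemidef := by
    simpa [Matrix.conjTranspose_eq_transpose_of_trivial] using
      Matrix.posSemidef_conjTranspose_mul_self R
  have hlamI : (lam • (1 : Matrix (Fin r) (Fin r) ℝ)).PosSemidef := by
    rw [Matrix.smul_one_eq_diagonal]
    exact Matrix.posSemidef_diagonal_iff.mpr fun i => hlam.le
  have hMpsd : M.PosSemidef := hRtR.add hlamI
  set S := psqrt M with hS
  have hSdef : S = (hMpsd.1.eigenvectorUnitary : Matrix (Fin r) (Fin r) ℝ) *
      diagonal (fun i => Real.sqrt (hMpsd.1.eigenvalues i)) *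
      (star hMpsd.1.eigenvectorUnitary : Matrix (Fin r) (Fin r) ℝ) := by
    rw [hS, psqrt, dif_pos hMpsd]
  have hSS : S * S = M := by
    rw [hSdef]
    have hu : (star hMpsd.1.eigenvectorUnitary : Matrix (Fin r) (Fin r) ℝ) *
        (hMpsd.1.eigenvectorUnitary : Matrix (Fin r) (Fin r) ℝ) = 1 :=
      Unitary.coe_star_mul_self _
    have hd : diagonal (fun i => Real.sqrt (hMpsd.1.eigenvalues i)) *
        diagonal (fun i => Real.sqrt (hMpsd.1.eigenvalues i)) =
        diagonal (RCLike.ofReal ∘ hMpsd.1.eigenvalues) := by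
      rw [diagonal_mul_diagonal]
      congr 1
      funext i
      simp [Real.mul_self_sqrt (hMpsd.eigenvalues_nonneg i)]
    conv_rhs => rw [hMpsd.1.spectral_theorem, Unitary.conjStarAlgAut_apply]
    rw [← hd]
    simp only [Matrix.mul_assoc]
    rw [← Matrix.mul_assoc _ _ (diagonal _ * _), hu, Matrix.one_mul]
  have hSt : Sᵀ = S := by
    rw [← Matrix.conjTranspose_eq_transpose_of_trivial, hSdef]
    simp [Matrix.mul_assoc, Matrix.star_eq_conjTranspose, Matrix.conjTranspose_mul,
      Matrix.diagonal_conjTranspose]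
  -- ranks
  have hrank1 : X.rank ≤ 2 * r := by
    calc X.rank ≤ Rᵀ.rank := hX ▸ Matrix.rank_mul_le_right _ _
    _ ≤ Fintype.card (Fin r) := Matrix.rank_le_card_height _
    _ ≤ 2 * r := by simp; omega
  have hrank2 : ((B - η • D) * Rᵀ).rank ≤ 2 * r := by
    calc ((B - η • D) * Rᵀ).rank ≤ Rᵀ.rank := Matrix.rank_mul_le_right _ _
    _ ≤ Fintype.card (Fin r) := Matrix.rank_le_card_height _
    _ ≤ 2 * r := by simp; omega
  have key := hsmooth X ((B - η • D) * Rᵀ) hrank1 hrank2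
  have hdiffX : (B - η • D) * Rᵀ - X = (-η) • (D * Rᵀ) := by
    rw [hX, Matrix.sub_mul]
    rw [Matrix.smul_mul]
    abel_nf
    simp [neg_smul]
  rw [hdiffX] at key
  -- inner product term
  have hip : finner (gradf X) ((-η) • (D * Rᵀ)) = -(η * finner (gradf X * R) D) := by
    simp only [finner, Matrix.transpose_mul, Matrix.trace_smul, smul_eq_mul]
    rw [Matrix.mul_smul, Matrix.trace_smul]
    have : (gradf X)ᵀ * (D * Rᵀ) = ((gradf X)ᵀ * D) * Rᵀ := by rw [Matrix.mul_assoc]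
    rw [this, Matrix.trace_mul_comm, smul_eq_mul, Matrix.mul_assoc]
    ring
  rw [hip] at key
  -- norm term
  have hns : fnorm ((-η) • (D * Rᵀ)) ^ 2 = η ^ 2 * finner (D * Rᵀ) (D * Rᵀ) := by
    rw [fnorm_sq]
    simp only [finner, Matrix.transpose_smul, Matrix.smul_mul, Matrix.mul_smul,
      Matrix.trace_smul, smul_eq_mul]
    ring
  rw [hns] at key
  have hcmp : finner (D * Rᵀ) (D * Rᵀ) ≤ finner (D * S) (D * S) := by
    have e1 : finner (D * Rᵀ) (D * Rᵀ) = ((Dᵀ * D) * (Rᵀ * R)).trace := by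
      simp only [finner, Matrix.transpose_mul, Matrix.transpose_transpose]
      rw [Matrix.mul_assoc, Matrix.trace_mul_comm, Matrix.mul_assoc, Matrix.mul_assoc, ← Matrix.mul_assoc Dᵀ D]
    have e2 : finner (D * S) (D * S) = ((Dᵀ * D) * M).trace := by
      simp only [finner, Matrix.transpose_mul, hSt]
      rw [Matrix.mul_assoc, Matrix.trace_mul_comm]
      rw [Matrix.mul_assoc, Matrix.mul_assoc, hSS, ← Matrix.mul_assoc]
    rw [e1, e2, hM, Matrix.mul_add, Matrix.trace_add, le_add_iff_nonneg_right,
      Matrix.mul_smul, Matrix.trace_smul, smul_eq_mul]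
    have : (0:ℝ) ≤ (Dᵀ * D).trace := by
      have := finner_self_nonneg D
      simpa [finner] using this
    simpa using mul_nonneg hlam.le this
  calc f ((B - η • D) * Rᵀ)
      ≤ f X + -(η * finner (gradf X * R) D) + L / 2 * (η ^ 2 * finner (D * Rᵀ) (D * Rᵀ)) := key
    _ ≤ f X - η * finner (gradf X * R) D + η ^ 2 * L / 2 * fnorm (D * S) ^ 2 := by
        rw [fnorm_sq]
        have h2 : L / 2 * (η ^ 2 * finner (D * Rᵀ) (D * Rᵀ)) ≤ η ^ 2 * L / 2 * finner (D * S) (D * S) := by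
          have := mul_le_mul_of_nonneg_left hcmp (by positivity : (0:ℝ) ≤ η ^ 2 * L / 2)
          linarith
        linarith
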